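/- Descent recurrence (Macdonald/Fomin–Stanley): for every n and every non-identity permutation w of {1,...,n}, the principal Schubert specialization satisfies Υ_w = Σ_{i ∈ Des(w)} (i/ℓ(w)) · Υ_{w·s_i}, where Des(w) = {i : w(i) > w(i+1)} is the descent set of w, and also Υ_w = Σ_{i ∈ Des(w⁻¹)} (i/ℓ(w)) · Υ_{s_i·w}. Each permutation w·s_i (resp. s_i·w) occurring in the sums has length ℓ(w) − 1, and Υ_e = 1 for the identity e. -/

import Mathlib

open Equiv Finset

namespace Schubert

variable {n : ℕ}

/-- Number of inversions of a permutation of `{0,...,n-1}`. -/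
def len (w : Perm (Fin n)) : ℕ :=
  (Finset.univ.filter (fun p : Fin n × Fin n => p.1 < p.2 ∧ w p.2 < w p.1)).card

/-- One-based application: `app w i = w(i)` for `1 ≤ i ≤ n` (junk otherwise). -/
def app (w : Perm (Fin n)) (i : ℕ) : ℕ :=
  if h : i - 1 < n then ((w ⟨i - 1, h⟩ : Fin n) : ℕ) + 1 else i

/-- The adjacent transposition `s_i` (one-based), swapping positions `i` and `i+1`. -/
def s (n : ℕ) (i : ℕ) : Perm (Fin n) :=
  if h : 1 ≤ i ∧ i < n then Equiv.swap ⟨i - 1, by omega⟩ ⟨i, h.2⟩ else 1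

/-- The transposition `t_(a,b)` (one-based), swapping positions `a` and `b`. -/
def t (n : ℕ) (a b : ℕ) : Perm (Fin n) :=
  if h : 1 ≤ a ∧ a ≤ n ∧ 1 ≤ b ∧ b ≤ n then
    Equiv.swap ⟨a - 1, by omega⟩ ⟨b - 1, by omega⟩ else 1

/-- The longest permutation `w_0 = (n, n-1, ..., 1)`. -/
def w0 (n : ℕ) : Perm (Fin n) where
  toFun i := ⟨n - 1 - i.val, by have := i.isLt; omega⟩
  invFun i := ⟨n - 1 - i.val, by have := i.isLt; omega⟩
  left_inv i := by have := i.isLt; apply Fin.ext; show n - 1 - (n - 1 - i.val) = i.val; omega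
  right_inv i := by have := i.isLt; apply Fin.ext; show n - 1 - (n - 1 - i.val) = i.val; omega

/-- Descent set (one-based): `Des(w) = {i ∈ {1,...,n-1} : w(i) > w(i+1)}`. -/
def des (w : Perm (Fin n)) : Finset ℕ :=
  (Finset.Icc 1 (n - 1)).filter (fun i => app w (i + 1) < app w i)

/-- Major index. -/
def maj (w : Perm (Fin n)) : ℕ := ∑ i ∈ des w, i

open Classical in
/-- The principal Schubert specialization
`Υ_w = 𝔖_w(1,...,1) = (1/ℓ(w)!) ∑_{(a_1,...,a_{ℓ(w)}) ∈ R(w)} a_1 ⋯ a_{ℓ(w)}`,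
where a reduced word for `w` is a word of length `ℓ(w)` in letters `1,...,n-1`
whose product of adjacent transpositions is `w`. -/
noncomputable def Upsilon (w : Perm (Fin n)) : ℚ :=
  (∑ f : Fin (len w) → Fin (n - 1),
      if (List.ofFn (fun j => s n ((f j : ℕ) + 1))).prod = w then
        ∏ j, ((f j : ℚ) + 1)
      else 0)
    / (len w).factorial

/-! ### Auxiliary lemmas -/

set_option maxHeartbeats 1000000 in
lemma swap_lt {a b x y : Fin n} (hab : (a : ℕ) + 1 = b) (hxy : x < y)
    (hne : ¬(x = a ∧ y = b)) : Equiv.swap a b x < Equiv.swap a b y := by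
  have hne' : ¬((x : ℕ) = a ∧ (y : ℕ) = b) := fun h => hne ⟨Fin.ext h.1, Fin.ext h.2⟩
  have hxy' : (x : ℕ) < y := hxy
  rw [Fin.lt_def, Equiv.swap_apply_def, Equiv.swap_apply_def]
  have hb := b.2
  split_ifs <;> (simp only [Fin.ext_iff] at *; omega)

lemma len_mul_swap (w : Perm (Fin n)) (a b : Fin n) (hab : (a : ℕ) + 1 = b) :
    len (w * Equiv.swap a b) = if w b < w a then len w - 1 else len w + 1 := by
  classical
  have hablt : a < b := Fin.lt_def.2 (by omega)
  have key : ∀ w' : Perm (Fin n),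
      len w' = (univ.filter (fun p : Fin n × Fin n =>
        (p.1 < p.2 ∧ w' p.2 < w' p.1) ∧ p ≠ (a, b))).card
        + (if w' b < w' a then 1 else 0) := by
    intro w'
    rw [len, ← Finset.card_filter_add_card_filter_not
      (p := fun p : Fin n × Fin n => p ≠ (a, b)), Finset.filter_filter]
    congr 1
    have : (univ.filter (fun p : Fin n × Fin n => p.1 < p.2 ∧ w' p.2 < w' p.1)).filter
        (fun p => ¬p ≠ (a, b)) =
        (univ.filter (fun p : Fin n × Fin n => p.1 < p.2 ∧ w' p.2 < w' p.1)).filter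
        (fun p => p = (a, b)) := by
      apply Finset.filter_congr; intro p _; simp
    have hmem : ((a, b) ∈ univ.filter (fun p : Fin n × Fin n => p.1 < p.2 ∧ w' p.2 < w' p.1))
        ↔ w' b < w' a := by
      simp only [Finset.mem_filter, Finset.mem_univ, true_and]
      exact ⟨fun h => h.2, fun h => ⟨hablt, h⟩⟩
    rw [this, Finset.filter_eq']
    by_cases h : w' b < w' a
    · rw [if_pos (hmem.2 h), if_pos h, Finset.card_singleton]
    · rw [if_neg (fun hm => h (hmem.1 hm)), if_neg h, Finset.card_empty]
  have hcard : (univ.filter (fun p : Fin n × Fin n =>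
        (p.1 < p.2 ∧ (w * Equiv.swap a b) p.2 < (w * Equiv.swap a b) p.1) ∧ p ≠ (a, b))).card
      = (univ.filter (fun p : Fin n × Fin n =>
        (p.1 < p.2 ∧ w p.2 < w p.1) ∧ p ≠ (a, b))).card := by
    apply Finset.card_nbij' (i := fun p => (Equiv.swap a b p.1, Equiv.swap a b p.2))
      (j := fun p => (Equiv.swap a b p.1, Equiv.swap a b p.2))
    · intro p hp
      change p ∈ (univ.filter (fun p : Fin n × Fin n =>
          (p.1 < p.2 ∧ (w * Equiv.swap a b) p.2 < (w * Equiv.swap a b) p.1) ∧ p ≠ (a, b))) at hp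
      change (Equiv.swap a b p.1, Equiv.swap a b p.2) ∈ (univ.filter (fun p : Fin n × Fin n =>
          (p.1 < p.2 ∧ w p.2 < w p.1) ∧ p ≠ (a, b)))
      rw [Finset.mem_filter] at hp ⊢
      simp only [Finset.coe_filter, Set.mem_setOf_eq, Finset.mem_coe, Finset.mem_filter, Finset.mem_univ, true_and, Perm.mul_apply] at hp ⊢
      obtain ⟨⟨h1, h2⟩, h3⟩ := hp
      have hne : ¬(p.1 = a ∧ p.2 = b) := by
        intro ⟨ha, hb⟩; exact h3 (Prod.ext ha hb)
      refine ⟨⟨swap_lt hab h1 hne, h2⟩, ?_⟩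
      intro hc
      have h1' : Equiv.swap a b p.1 = a := congrArg Prod.fst hc
      have h2' : Equiv.swap a b p.2 = b := congrArg Prod.snd hc
      have hp1 : p.1 = b := by
        have := congrArg (Equiv.swap a b) h1'
        simpa [Equiv.swap_apply_left] using this
      have hp2 : p.2 = a := by
        have := congrArg (Equiv.swap a b) h2'
        simpa [Equiv.swap_apply_right] using this
      rw [hp1, hp2] at h1
      have := Fin.lt_def.1 h1
      omega
    · intro p hp
      change p ∈ (univ.filter (fun p : Fin n × Fin n =>
          (p.1 < p.2 ∧ w p.2 < w p.1) ∧ p ≠ (a, b))) at hp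
      change (Equiv.swap a b p.1, Equiv.swap a b p.2) ∈ (univ.filter (fun p : Fin n × Fin n =>
          (p.1 < p.2 ∧ (w * Equiv.swap a b) p.2 < (w * Equiv.swap a b) p.1) ∧ p ≠ (a, b)))
      rw [Finset.mem_filter] at hp ⊢
      simp only [Finset.coe_filter, Set.mem_setOf_eq, Finset.mem_coe, Finset.mem_filter, Finset.mem_univ, true_and, Perm.mul_apply] at hp ⊢
      obtain ⟨⟨h1, h2⟩, h3⟩ := hp
      have hne : ¬(p.1 = a ∧ p.2 = b) := by
        intro ⟨ha, hb⟩; exact h3 (Prod.ext ha hb)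
      refine ⟨⟨swap_lt hab h1 hne, by simpa using h2⟩, ?_⟩
      intro hc
      have h1' : Equiv.swap a b p.1 = a := congrArg Prod.fst hc
      have h2' : Equiv.swap a b p.2 = b := congrArg Prod.snd hc
      have hp1 : p.1 = b := by
        have := congrArg (Equiv.swap a b) h1'
        simpa [Equiv.swap_apply_left] using this
      have hp2 : p.2 = a := by
        have := congrArg (Equiv.swap a b) h2'
        simpa [Equiv.swap_apply_right] using this
      rw [hp1, hp2] at h1
      have := Fin.lt_def.1 h1
      omega
    · intro p _; simp
    · intro p _; simp
  have e1 := key (w * Equiv.swap a b)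
  have e2 := key w
  rw [hcard] at e1
  have hwb : (w * Equiv.swap a b) b = w a := by simp [Perm.mul_apply]
  have hwa : (w * Equiv.swap a b) a = w b := by simp [Perm.mul_apply]
  rw [hwb, hwa] at e1
  have hne : w a ≠ w b := fun h => absurd (congrArg Fin.val (w.injective h)) (by omega)
  rcases lt_or_gt_of_ne hne with h | h
  · rw [if_neg (not_lt.2 h.le)] at e2
    rw [if_pos h] at e1
    rw [if_neg (not_lt.2 h.le)]
    omega
  · rw [if_pos h] at e2
    rw [if_neg (not_lt.2 h.le)] at e1
    rw [if_pos h]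
    omega

lemma len_inv (w : Perm (Fin n)) : len w⁻¹ = len w := by
  classical
  apply Finset.card_nbij' (i := fun p => (w⁻¹ p.2, w⁻¹ p.1)) (j := fun p => (w p.2, w p.1))
  · intro p hp
    simp only [Finset.coe_filter, Set.mem_setOf_eq, Finset.mem_coe, Finset.mem_filter, Finset.mem_univ, true_and] at hp ⊢
    exact ⟨hp.2, by simpa using hp.1⟩
  · intro p hp
    simp only [Finset.coe_filter, Set.mem_setOf_eq, Finset.mem_coe, Finset.mem_filter, Finset.mem_univ, true_and] at hp ⊢
    exact ⟨hp.2, by simpa using hp.1⟩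
  · intro p _; simp
  · intro p _; simp

lemma s_mul_self (i : ℕ) : s n i * s n i = 1 := by
  unfold s; split <;> simp

lemma s_inv (i : ℕ) : (s n i)⁻¹ = s n i :=
  inv_eq_of_mul_eq_one_right (s_mul_self i)

lemma len_one : len (1 : Perm (Fin n)) = 0 := by
  rw [len, Finset.card_eq_zero, Finset.filter_eq_empty_iff]
  intro p _
  simp only [Perm.one_apply]
  rintro ⟨h1, h2⟩
  exact absurd h2 (not_lt.2 h1.le)

lemma len_eq_zero {w : Perm (Fin n)} (h : len w = 0) : w = 1 := by
  classical
  rw [len, Finset.card_eq_zero] at h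
  have hmono : StrictMono w := by
    intro x y hxy
    by_contra hc
    have hne : w x ≠ w y := fun he => absurd (w.injective he) (ne_of_lt hxy)
    have : (x, y) ∈ (univ.filter (fun p : Fin n × Fin n => p.1 < p.2 ∧ w p.2 < w p.1)) := by
      simp only [Finset.mem_filter, Finset.mem_univ, true_and]
      exact ⟨hxy, lt_of_le_of_ne (not_lt.1 hc) hne.symm⟩
    rw [h] at this; exact absurd this (Finset.notMem_empty _)
  haveI : WellFoundedLT (Fin n) := Finite.to_wellFoundedLT
  have : (w : Fin n → Fin n) = id := by
    apply (StrictMono.range_inj (f := (w : Fin n → Fin n)) (g := id) hmono strictMono_id).1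
    simp [Set.range_id, Equiv.range_eq_univ]
  exact Equiv.ext fun x => congrFun this x

lemma len_mul_s_le (w : Perm (Fin n)) (i : ℕ) : len (w * s n i) ≤ len w + 1 := by
  unfold s; split
  · next h =>
    rw [len_mul_swap w _ _ (show i - 1 + 1 = i by omega)]
    split <;> omega
  · simp

lemma len_s_mul_le (w : Perm (Fin n)) (i : ℕ) : len (s n i * w) ≤ len w + 1 := by
  rw [← len_inv (s n i * w), mul_inv_rev, s_inv, ← len_inv w]
  exact len_mul_s_le w⁻¹ i

lemma len_word_le (l : List ℕ) : len ((l.map (s n)).prod) ≤ l.length := by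
  induction l with
  | nil => simp [len_one]
  | cons i l ih =>
    rw [List.map_cons, List.prod_cons]
    calc len (s n i * (l.map (s n)).prod) ≤ len ((l.map (s n)).prod) + 1 := len_s_mul_le _ i
    _ ≤ l.length + 1 := by omega
    _ = (i :: l).length := by simp

open Classical in
/-- Sum over words of length `k` with product `w` of the product of letters. -/
noncomputable def W (n k : ℕ) (w : Perm (Fin n)) : ℚ :=
  ∑ f : Fin k → Fin (n - 1),
    if (List.ofFn (fun j => s n ((f j : ℕ) + 1))).prod = w then ∏ j, ((f j : ℚ) + 1) else 0

lemma Upsilon_eq (w : Perm (Fin n)) : Upsilon w = W n (len w) w / (len w).factorial := rfl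

lemma W_eq_zero {k : ℕ} {w : Perm (Fin n)} (h : k < len w) : W n k w = 0 := by
  classical
  apply Finset.sum_eq_zero
  intro f _
  rw [if_neg]
  intro hp
  have : len ((List.ofFn (fun j => ((f j : ℕ) + 1))).map (s n)).prod
      ≤ (List.ofFn (fun j => ((f j : ℕ) + 1))).length := len_word_le _
  simp only [List.map_ofFn, List.length_ofFn, Function.comp_def] at this
  rw [hp] at this
  omega

lemma W_succ (k : ℕ) (w : Perm (Fin n)) :
    W n (k + 1) w = ∑ c : Fin (n - 1), ((c : ℚ) + 1) * W n k (s n ((c : ℕ) + 1) * w) := by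
  classical
  rw [W, ← Equiv.sum_comp (Fin.consEquiv (fun _ : Fin (k + 1) => Fin (n - 1))),
    Fintype.sum_prod_type]
  apply Finset.sum_congr rfl
  intro c _
  rw [W, Finset.mul_sum]
  apply Finset.sum_congr rfl
  intro g _
  have hcond : (List.ofFn (fun j : Fin (k + 1) =>
      s n (((Fin.consEquiv (fun _ : Fin (k + 1) => Fin (n - 1)) (c, g)) j : ℕ) + 1))).prod
      = s n ((c : ℕ) + 1) * (List.ofFn (fun j : Fin k => s n ((g j : ℕ) + 1))).prod := by
    simp only [Fin.consEquiv, Equiv.coe_fn_mk, List.ofFn_succ, Fin.cons_zero, Fin.cons_succ,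
      List.prod_cons]
  rw [hcond]
  have hiff : (s n ((c : ℕ) + 1) * (List.ofFn (fun j : Fin k => s n ((g j : ℕ) + 1))).prod = w)
      ↔ ((List.ofFn (fun j : Fin k => s n ((g j : ℕ) + 1))).prod = s n ((c : ℕ) + 1) * w) := by
    constructor
    · rintro rfl; rw [← mul_assoc, s_mul_self, one_mul]
    · intro h; rw [h, ← mul_assoc, s_mul_self, one_mul]
  have hprod : (∏ j : Fin (k + 1),
      (((Fin.consEquiv (fun _ : Fin (k + 1) => Fin (n - 1)) (c, g)) j : ℚ) + 1))
      = ((c : ℚ) + 1) * ∏ j : Fin k, ((g j : ℚ) + 1) := by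
    simp only [Fin.consEquiv, Equiv.coe_fn_mk, Fin.prod_univ_succ, Fin.cons_zero, Fin.cons_succ]
  rw [if_congr hiff hprod rfl]
  by_cases h : (List.ofFn fun j : Fin k => s n ((g j : ℕ) + 1)).prod = s n ((c : ℕ) + 1) * w
  · rw [if_pos h, if_pos h]
  · rw [if_neg h, if_neg h, mul_zero]

lemma ofFn_comp_rev {α : Type*} : ∀ {k : ℕ} (g : Fin k → α),
    List.ofFn (fun j => g j.rev) = (List.ofFn g).reverse := by
  intro k
  induction k with
  | zero => intro g; simp
  | succ k ih =>
    intro g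
    rw [List.ofFn_succ, List.ofFn_succ' g]
    show g (Fin.rev 0) :: List.ofFn (fun i : Fin k => g (Fin.rev i.succ)) = _
    simp only [Fin.rev_succ]
    rw [ih (fun i => g i.castSucc)]
    simp [List.concat_eq_append]

lemma W_inv (k : ℕ) (w : Perm (Fin n)) : W n k w⁻¹ = W n k w := by
  classical
  rw [W, W]
  rw [← Function.Bijective.sum_comp (g := fun f : Fin k → Fin (n - 1) => _)
    (Function.Involutive.bijective (f := fun f : Fin k → Fin (n - 1) => f ∘ Fin.rev)
      (fun f => by funext j; simp [Function.comp, Fin.rev_rev]))]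
  apply Finset.sum_congr rfl
  intro f _
  have hword : (List.ofFn (fun j : Fin k => s n (((f ∘ Fin.rev) j : ℕ) + 1))).prod
      = ((List.ofFn (fun j : Fin k => s n ((f j : ℕ) + 1))).prod)⁻¹ := by
    have : (List.ofFn (fun j : Fin k => s n (((f ∘ Fin.rev) j : ℕ) + 1)))
        = (List.ofFn (fun j : Fin k => s n ((f j : ℕ) + 1))).reverse :=
      ofFn_comp_rev (fun j => s n ((f j : ℕ) + 1))
    have hmap : (List.ofFn (fun j : Fin k => s n ((f j : ℕ) + 1))).map (fun x => x⁻¹)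
        = List.ofFn (fun j : Fin k => s n ((f j : ℕ) + 1)) := by
      rw [List.map_ofFn]
      exact congrArg List.ofFn (funext fun j => s_inv _)
    rw [this, List.prod_reverse_noncomm, hmap]
  have hiff : ((List.ofFn (fun j : Fin k => s n (((f ∘ Fin.rev) j : ℕ) + 1))).prod = w⁻¹)
      ↔ ((List.ofFn (fun j : Fin k => s n ((f j : ℕ) + 1))).prod = w) := by
    rw [hword, inv_inj]
  have hprod : (∏ j : Fin k, (((f ∘ Fin.rev) j : ℚ) + 1)) = ∏ j : Fin k, ((f j : ℚ) + 1) :=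
    Fintype.prod_bijective Fin.rev (Fin.rev_involutive.bijective) _ _ (fun j => rfl)
  rw [if_congr hiff hprod rfl]

lemma Upsilon_inv (w : Perm (Fin n)) : Upsilon w⁻¹ = Upsilon w := by
  rw [Upsilon_eq, Upsilon_eq, len_inv, W_inv]

/-- Membership in `des w` unpacked. -/
lemma mem_des_iff {w : Perm (Fin n)} {i : ℕ} (h1 : 1 ≤ i) (h2 : i ≤ n - 1) :
    i ∈ des w ↔ (w ⟨i, by omega⟩ : ℕ) < w ⟨i - 1, by omega⟩ := by
  have hi1 : i - 1 < n := by omega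
  have hi2 : i + 1 - 1 < n := by omega
  have he : (⟨i + 1 - 1, hi2⟩ : Fin n) = ⟨i, by omega⟩ := Fin.ext (show i + 1 - 1 = i by omega)
  rw [des, Finset.mem_filter]
  simp only [Finset.mem_Icc, app, dif_pos hi1, dif_pos hi2, he]
  omega

lemma len_mul_s {w : Perm (Fin n)} {i : ℕ} (h1 : 1 ≤ i) (h2 : i ≤ n - 1) :
    len (w * s n i) = if i ∈ des w then len w - 1 else len w + 1 := by
  have hin : 1 ≤ i ∧ i < n := ⟨h1, by omega⟩
  rw [s, dif_pos hin, len_mul_swap w _ _ (show i - 1 + 1 = i by omega)]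
  have hiff : (w ⟨i, by omega⟩ < w ⟨i - 1, by omega⟩) ↔ i ∈ des w := by
    rw [Fin.lt_def]; exact (mem_des_iff h1 h2).symm
  by_cases hd : i ∈ des w
  · rw [if_pos (hiff.2 hd), if_pos hd]
  · rw [if_neg (fun hh => hd (hiff.1 hh)), if_neg hd]

lemma des_pos_len {w : Perm (Fin n)} {i : ℕ} (hi : i ∈ des w) : 1 ≤ len w := by
  have hmem : i ∈ Finset.Icc 1 (n - 1) := Finset.mem_filter.1 hi |>.1
  rw [Finset.mem_Icc] at hmem
  have h := (mem_des_iff hmem.1 hmem.2).1 hi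
  rw [len, Nat.succ_le_iff, Finset.card_pos]
  refine ⟨(⟨i - 1, by omega⟩, ⟨i, by omega⟩), ?_⟩
  simp only [Finset.mem_filter, Finset.mem_univ, true_and]
  exact ⟨Fin.lt_def.2 (show i - 1 < i by omega), Fin.lt_def.2 h⟩

lemma len_s_mul {w : Perm (Fin n)} {i : ℕ} (h1 : 1 ≤ i) (h2 : i ≤ n - 1) :
    len (s n i * w) = if i ∈ des w⁻¹ then len w - 1 else len w + 1 := by
  rw [← len_inv (s n i * w), mul_inv_rev, s_inv, len_mul_s h1 h2, len_inv]

/-- The second recurrence. -/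
lemma recurrence_left (w : Perm (Fin n)) (hw : w ≠ 1) :
    Upsilon w = ∑ i ∈ des w⁻¹, ((i : ℚ) / (len w : ℚ)) * Upsilon (s n i * w) := by
  classical
  have hk : len w ≠ 0 := fun h => hw (len_eq_zero h)
  set k := len w with hkdef
  have hk1 : k - 1 + 1 = k := by omega
  have hsum : W n k w = ∑ c : Fin (n - 1), ((c : ℚ) + 1) * W n (k - 1) (s n ((c : ℕ) + 1) * w) := by
    rw [← hk1, W_succ]
    simp only [hk1]
  -- reindex the sum over Fin (n-1) by Icc 1 (n-1)
  have hreindex : (∑ c : Fin (n - 1), ((c : ℚ) + 1) * W n (k - 1) (s n ((c : ℕ) + 1) * w))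
      = ∑ i ∈ Finset.Icc 1 (n - 1), (i : ℚ) * W n (k - 1) (s n i * w) := by
    rw [Fin.sum_univ_eq_sum_range
      (fun c => ((c : ℚ) + 1) * W n (k - 1) (s n (c + 1) * w)) (n - 1)]
    apply Finset.sum_nbij' (i := fun c : ℕ => c + 1) (j := fun i : ℕ => i - 1)
    · intro c hc; rw [Finset.mem_range] at hc; rw [Finset.mem_Icc]; omega
    · intro i hi; rw [Finset.mem_Icc] at hi; rw [Finset.mem_range]; omega
    · intro c _; omega
    · intro i hi; rw [Finset.mem_Icc] at hi; omega
    · intro c _; push_cast; ring_nf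
  have hzero : ∀ i ∈ Finset.Icc 1 (n - 1), i ∉ des w⁻¹ →
      (i : ℚ) * W n (k - 1) (s n i * w) = 0 := by
    intro i hi hnd
    rw [Finset.mem_Icc] at hi
    have : len (s n i * w) = k + 1 := by rw [len_s_mul hi.1 hi.2, if_neg hnd]
    rw [W_eq_zero (by omega), mul_zero]
  have hdes : ∀ i ∈ des w⁻¹, len (s n i * w) = k - 1 := by
    intro i hi
    have hmem : i ∈ Finset.Icc 1 (n - 1) := Finset.mem_filter.1 hi |>.1
    rw [Finset.mem_Icc] at hmem
    rw [len_s_mul hmem.1 hmem.2, if_pos hi]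
  have hsub : des w⁻¹ ⊆ Finset.Icc 1 (n - 1) := Finset.filter_subset _ _
  have hsplit : (∑ i ∈ Finset.Icc 1 (n - 1), (i : ℚ) * W n (k - 1) (s n i * w))
      = ∑ i ∈ des w⁻¹, (i : ℚ) * W n (k - 1) (s n i * w) :=
    (Finset.sum_subset hsub (fun i hi hni => hzero i hi hni)).symm
  rw [Upsilon_eq, ← hkdef, hsum, hreindex, hsplit, Finset.sum_div]
  apply Finset.sum_congr rfl
  intro i hi
  rw [Upsilon_eq, hdes i hi]
  have hfact : (k.factorial : ℚ) = (k : ℚ) * ((k - 1).factorial : ℚ) := by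
    rw [← hk1, Nat.factorial_succ]
    push_cast [hk1]
    ring
  have hkne : (k : ℚ) ≠ 0 := Nat.cast_ne_zero.2 hk
  have hfne : ((k - 1).factorial : ℚ) ≠ 0 := Nat.cast_ne_zero.2 (Nat.factorial_ne_zero _)
  rw [hfact, div_mul_div_comm]

/-- Descent recurrence, Macdonald/Fomin–Stanley:
for every non-identity `w ∈ S_n`,
`Υ_w = ∑_{i ∈ Des(w)} (i/ℓ(w)) Υ_{w s_i} = ∑_{i ∈ Des(w⁻¹)} (i/ℓ(w)) Υ_{s_i w}`,
each `w s_i` (resp. `s_i w`) in the sums has length `ℓ(w) - 1`, and `Υ_e = 1`. -/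
theorem descent_recurrence (n : ℕ) (w : Perm (Fin n)) (hw : w ≠ 1) :
    (Upsilon w = ∑ i ∈ des w, ((i : ℚ) / (len w : ℚ)) * Upsilon (w * s n i)) ∧
    (Upsilon w = ∑ i ∈ des w⁻¹, ((i : ℚ) / (len w : ℚ)) * Upsilon (s n i * w)) ∧
    (∀ i ∈ des w, len (w * s n i) = len w - 1) ∧
    (∀ i ∈ des w⁻¹, len (s n i * w) = len w - 1) ∧
    Upsilon (1 : Perm (Fin n)) = 1 := by
  classical
  have hwinv : w⁻¹ ≠ 1 := fun h => hw (by rw [← inv_inv w, h, inv_one])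
  refine ⟨?_, recurrence_left w hw, ?_, ?_, ?_⟩
  · have h := recurrence_left w⁻¹ hwinv
    rw [Upsilon_inv, inv_inv, len_inv] at h
    rw [h]
    apply Finset.sum_congr rfl
    intro i _
    congr 1
    rw [← Upsilon_inv (w * s n i), mul_inv_rev, s_inv]
  · intro i hi
    have hmem : i ∈ Finset.Icc 1 (n - 1) := Finset.mem_filter.1 hi |>.1
    rw [Finset.mem_Icc] at hmem
    rw [len_mul_s hmem.1 hmem.2, if_pos hi]
  · intro i hi
    have hmem : i ∈ Finset.Icc 1 (n - 1) := Finset.mem_filter.1 hi |>.1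
    rw [Finset.mem_Icc] at hmem
    rw [len_s_mul hmem.1 hmem.2, if_pos hi]
  · rw [Upsilon_eq, len_one]
    rw [show W n 0 (1 : Perm (Fin n)) = 1 from ?_]
    · simp
    · rw [W]
      rw [Fintype.sum_eq_single (fun j : Fin 0 => j.elim0)]
      · simp
      · intro f hf
        exact absurd (funext fun j => j.elim0) hf

end Schubert
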